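/- Let h₁, ..., h_{q'} : ℝ → ℝ be differentiable with each hᵢ(t) < Mᵢ for all t, Mᵢ > 0, let αᵢ > 0 and γ > 0, and suppose Σᵢ αᵢ hᵢ'(t) ≥ γ for all t in any interval where min{h₁(t),...,h_{q'}(t)} < 0. If additionally min{h₁(t),...,h_{q'}(t)} < 0 for all t ≥ 0, then lim_{t→∞} Σᵢ αᵢ hᵢ(t) = ∞, which is a contradiction; hence the assumption that the minimum stays negative for all time is impossible. -/

import Mathlib

theorem stmt_3 (q' : ℕ) (hq : 1 ≤ q') (h : Fin q' → ℝ → ℝ)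
    (hdiff : ∀ i, Differentiable ℝ (h i))
    (M : Fin q' → ℝ) (hM : ∀ i, 0 < M i) (hbdd : ∀ i, ∀ t : ℝ, h i t < M i)
    (α : Fin q' → ℝ) (hα : ∀ i, 0 < α i) (γ : ℝ) (hγ : 0 < γ)
    (hne : (Finset.univ : Finset (Fin q')).Nonempty)
    (hineq : ∀ t : ℝ, (Finset.univ.inf' hne fun i => h i t) < 0 →
      ∑ i, α i * deriv (h i) t ≥ γ)
    (hneg : ∀ t : ℝ, 0 ≤ t → (Finset.univ.inf' hne fun i => h i t) < 0) :
    Filter.Tendsto (fun t => ∑ i, α i * h i t) Filter.atTop Filter.atTop ∧ False := by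
  set F : ℝ → ℝ := fun t => ∑ i, α i * h i t with hF
  have hFdiff : Differentiable ℝ F := by
    apply Differentiable.fun_sum
    intro i _
    exact (hdiff i).const_mul _
  have hFderiv : ∀ t, deriv F t = ∑ i, α i * deriv (h i) t := by
    intro t
    have : HasDerivAt F (∑ i, α i * deriv (h i) t) t := by
      apply HasDerivAt.fun_sum
      intro i _
      exact ((hdiff i t).hasDerivAt).const_mul _
    exact this.deriv
  -- g = F - γ * id is monotone on Ici 0
  set g : ℝ → ℝ := fun t => F t - γ * t with hg
  have hgdiff : Differentiable ℝ g := hFdiff.sub (differentiable_const _ |>.mul differentiable_id)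
  have hgmono : MonotoneOn g (Set.Ici (0:ℝ)) := by
    apply monotoneOn_of_deriv_nonneg (convex_Ici 0) hgdiff.continuous.continuousOn
      (hgdiff.differentiableOn)
    intro t ht
    simp only [interior_Ici, Set.mem_Ioi] at ht
    have : deriv g t = deriv F t - γ := by
      have h1 : HasDerivAt g (deriv F t - γ) t := by
        have := (hFdiff t).hasDerivAt
        have h2 : HasDerivAt (fun t : ℝ => γ * t) γ t := by
          simpa using (hasDerivAt_id t).const_mul γ
        exact this.sub h2
      exact h1.deriv
    rw [this, hFderiv]
    have := hineq t (hneg t ht.le)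
    linarith
  have key : ∀ t : ℝ, 0 ≤ t → F 0 + γ * t ≤ F t := by
    intro t ht
    have := hgmono (Set.mem_Ici.mpr le_rfl) (Set.mem_Ici.mpr ht) ht
    simp only [hg] at this
    linarith [this]
  have htend : Filter.Tendsto F Filter.atTop Filter.atTop := by
    apply Filter.tendsto_atTop_mono' _ (_ : ∀ᶠ t in Filter.atTop, F 0 + γ * t ≤ F t)
    · exact Filter.tendsto_atTop_add_const_left _ _
        (Filter.Tendsto.const_mul_atTop hγ Filter.tendsto_id)
    · filter_upwards [Filter.eventually_ge_atTop 0] with t ht using key t ht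
  refine ⟨htend, ?_⟩
  have hbound : ∀ t, F t < ∑ i, α i * M i := by
    intro t
    apply Finset.sum_lt_sum_of_nonempty hne
    intro i _
    exact mul_lt_mul_of_pos_left (hbdd i t) (hα i)
  obtain ⟨t, ht⟩ := (htend.eventually_ge_atTop (∑ i, α i * M i)).exists
  exact absurd (hbound t) (not_lt.mpr ht)
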